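/- (Upward closedness of the replacement region, the core of the control-limit proof.) For each t ∈ {0,1,…,T−1} and each k ∈ ℕ, the map x ↦ E_{(Z,K)}[Ṽ_{t+1}(x+Z, k+Z+K)] is non-decreasing in x ∈ ℕ; consequently, if preventive replacement is optimal at deterioration level x (i.e. c_p + E_{(Z,K)}[Ṽ_{t+1}(Z, k+Z+K)] ≤ E_{(Z,K)}[Ṽ_{t+1}(x+Z, k+Z+K)]) then it is optimal at every x' ≥ x. -/

import Mathlib

open Filter

/-- Negative Binomial pmf with real shape `r` and success probability `p`:
`NB(r,p)(z) = Γ(z+r)/(Γ(r)·z!)·p^r·(1−p)^z` for `r > 0`, and `NB(0,p)` is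
the point mass at `0`. -/
noncomputable def NB (r p : ℝ) (z : ℕ) : ℝ :=
  if r = 0 then (if z = 0 then (1 : ℝ) else 0)
  else Real.Gamma ((z : ℝ) + r) / (Real.Gamma r * (Nat.factorial z : ℝ)) * p ^ r * (1 - p) ^ z

/-- `p_t = (β0 + N·t)/(β0 + N·t + 1)`. -/
noncomputable def pt (β0 : ℝ) (N t : ℕ) : ℝ :=
  (β0 + (N : ℝ) * (t : ℝ)) / (β0 + (N : ℝ) * (t : ℝ) + 1)

/-- Expectation `E_{(Z,K)}[f(Z,K)]` with `Z ~ NB(α0+k, p_t)` and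
`K ~ NB((N−1)(α0+k), p_t)` independent. -/
noncomputable def EZK (α0 β0 : ℝ) (N t k : ℕ) (f : ℕ → ℕ → ℝ) : ℝ :=
  ∑' z : ℕ, ∑' κ : ℕ,
    NB (α0 + (k : ℝ)) (pt β0 N t) z * NB (((N : ℝ) - 1) * (α0 + (k : ℝ))) (pt β0 N t) κ * f z κ

lemma pt_pos {β0 : ℝ} (hβ0 : 0 < β0) (N t : ℕ) : 0 < pt β0 N t := by
  have h : 0 < β0 + (N : ℝ) * (t : ℝ) := by positivity
  exact div_pos h (by linarith)

lemma pt_lt_one {β0 : ℝ} (hβ0 : 0 < β0) (N t : ℕ) : pt β0 N t < 1 := by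
  have h : 0 < β0 + (N : ℝ) * (t : ℝ) := by positivity
  unfold pt
  rw [div_lt_one (by linarith)]; linarith

lemma Gamma_add_nat {r : ℝ} (hr : 0 < r) (z : ℕ) :
    Real.Gamma ((z : ℝ) + r) = (∏ i ∈ Finset.range z, (r + (i : ℝ))) * Real.Gamma r := by
  induction z with
  | zero => simp
  | succ n ih =>
    have hne : (n : ℝ) + r ≠ 0 := by positivity
    have : ((n + 1 : ℕ) : ℝ) + r = ((n : ℝ) + r) + 1 := by push_cast; ring
    rw [this, Real.Gamma_add_one hne, ih, Finset.prod_range_succ]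
    ring

lemma NB_nonneg {r p : ℝ} (hr : 0 ≤ r) (hp : 0 < p) (hp1 : p < 1) (z : ℕ) :
    0 ≤ NB r p z := by
  unfold NB
  split_ifs with h1 h2
  · exact zero_le_one
  · exact le_refl 0
  · have hrpos : 0 < r := lt_of_le_of_ne hr (Ne.symm h1)
    have hG1 : 0 < Real.Gamma ((z : ℝ) + r) := Real.Gamma_pos_of_pos (by positivity)
    have hG2 : 0 < Real.Gamma r := Real.Gamma_pos_of_pos hrpos
    have : (0:ℝ) < (Nat.factorial z : ℝ) := by positivity
    have h1p : (0:ℝ) ≤ 1 - p := by linarith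
    positivity

lemma prod_range_cast_ascFactorial (m z : ℕ) :
    (∏ i ∈ Finset.range z, ((m : ℝ) + (i : ℝ))) = (m.ascFactorial z : ℕ) := by
  induction z with
  | zero => simp
  | succ n ih =>
    rw [Finset.prod_range_succ, ih, Nat.ascFactorial_succ]
    push_cast; ring

lemma NB_le_bound {r p : ℝ} (hr : 0 < r) (hp : 0 < p) (hp1 : p < 1) (z : ℕ) :
    NB r p z ≤ p ^ r * (((z + (⌈r⌉₊ - 1)).choose (⌈r⌉₊ - 1) : ℕ) * (1 - p) ^ z) := by
  have hG : 0 < Real.Gamma r := Real.Gamma_pos_of_pos hr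
  have hm : 1 ≤ ⌈r⌉₊ := Nat.one_le_ceil_iff.mpr hr
  set n : ℕ := ⌈r⌉₊ - 1 with hn
  have hmn : ⌈r⌉₊ = n + 1 := by omega
  have hfac : (0:ℝ) < (Nat.factorial z : ℝ) := by positivity
  have hq : (0:ℝ) ≤ 1 - p := by linarith
  have key : Real.Gamma ((z:ℝ) + r) / (Real.Gamma r * (Nat.factorial z : ℝ))
      ≤ ((z + n).choose n : ℕ) := by
    rw [Gamma_add_nat hr z]
    have heq : (∏ i ∈ Finset.range z, (r + (i : ℝ))) * Real.Gamma r
        / (Real.Gamma r * (Nat.factorial z : ℝ))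
        = (∏ i ∈ Finset.range z, (r + (i : ℝ))) / (Nat.factorial z : ℝ) := by
      field_simp
    rw [heq]
    have hprod : (∏ i ∈ Finset.range z, (r + (i : ℝ)))
        ≤ ∏ i ∈ Finset.range z, (((n:ℝ) + 1) + (i : ℝ)) := by
      apply Finset.prod_le_prod
      · intro i _; positivity
      · intro i _
        have := Nat.le_ceil r
        rw [hmn] at this; push_cast at this ⊢; linarith
    have hca : (∏ i ∈ Finset.range z, (((n:ℝ) + 1) + (i : ℝ)))
        = ((n+1).ascFactorial z : ℕ) := by
      have := prod_range_cast_ascFactorial (n+1) z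
      push_cast at this ⊢
      rw [← this]
    rw [div_le_iff₀ hfac]
    calc (∏ i ∈ Finset.range z, (r + (i : ℝ)))
        ≤ ((n+1).ascFactorial z : ℕ) := by rw [← hca]; exact hprod
      _ = ((Nat.factorial z) * (n + z).choose z : ℕ) := by
          rw [Nat.ascFactorial_eq_factorial_mul_choose]
      _ = ((z + n).choose n : ℕ) * (Nat.factorial z : ℝ) := by
          push_cast
          rw [Nat.add_comm n z, Nat.choose_symm_add]
          ring
  have hpr : (0:ℝ) ≤ p ^ r := Real.rpow_nonneg hp.le r
  have hqz : (0:ℝ) ≤ (1 - p) ^ z := pow_nonneg hq z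
  unfold NB
  rw [if_neg (ne_of_gt hr)]
  calc Real.Gamma ((z:ℝ) + r) / (Real.Gamma r * (Nat.factorial z : ℝ)) * p ^ r * (1 - p) ^ z
      ≤ (((z + n).choose n : ℕ) : ℝ) * p ^ r * (1 - p) ^ z := by
        apply mul_le_mul_of_nonneg_right _ hqz
        exact mul_le_mul_of_nonneg_right key hpr
    _ = p ^ r * (((z + n).choose n : ℕ) * (1 - p) ^ z) := by ring

lemma bound_hasSum {r p : ℝ} (hr : 0 < r) (hp : 0 < p) (hp1 : p < 1) :
    HasSum (fun z : ℕ => p ^ r * (((z + (⌈r⌉₊ - 1)).choose (⌈r⌉₊ - 1) : ℕ) * (1 - p) ^ z))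
      (p ^ r * (1 / (1 - (1 - p)) ^ ((⌈r⌉₊ - 1) + 1))) := by
  have hq : ‖(1 - p : ℝ)‖ < 1 := by
    rw [Real.norm_eq_abs, abs_lt]; constructor <;> linarith
  exact (hasSum_choose_mul_geometric_of_norm_lt_one (⌈r⌉₊ - 1) hq).mul_left _

lemma NB_summable {r p : ℝ} (hr : 0 ≤ r) (hp : 0 < p) (hp1 : p < 1) :
    Summable (NB r p) := by
  rcases eq_or_lt_of_le hr with h | h
  · have : NB r p = fun z : ℕ => if z = 0 then (1:ℝ) else 0 := by
      funext z; unfold NB; rw [if_pos h.symm]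
    rw [this]
    exact (hasSum_ite_eq 0 1).summable
  · exact Summable.of_nonneg_of_le (NB_nonneg hr hp hp1) (NB_le_bound h hp hp1)
      (bound_hasSum h hp hp1).summable

lemma NB_tsum_le {r p : ℝ} (hr : 0 ≤ r) (hp : 0 < p) (hp1 : p < 1) :
    ∑' z, NB r p z ≤ p⁻¹ := by
  rcases eq_or_lt_of_le hr with h | h
  · have h1 : NB r p = fun z : ℕ => if z = 0 then (1:ℝ) else 0 := by
      funext z; unfold NB; rw [if_pos h.symm]
    rw [h1, (hasSum_ite_eq 0 (1:ℝ)).tsum_eq]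
    rw [one_le_inv_iff₀]
    exact ⟨hp, hp1.le⟩
  · have hm : 1 ≤ ⌈r⌉₊ := Nat.one_le_ceil_iff.mpr h
    have hb := bound_hasSum h hp hp1
    have h2 : ∑' z, NB r p z ≤ p ^ r * (1 / (1 - (1 - p)) ^ ((⌈r⌉₊ - 1) + 1)) := by
      rw [← hb.tsum_eq]
      exact Summable.tsum_le_tsum (NB_le_bound h hp hp1) (NB_summable hr hp hp1) hb.summable
    refine h2.trans ?_
    have hmn : (⌈r⌉₊ - 1) + 1 = ⌈r⌉₊ := by omega
    have h3 : (1 : ℝ) - (1 - p) = p := by ring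
    rw [hmn, h3]
    have h4 : p ^ r * (1 / p ^ (⌈r⌉₊ : ℕ)) = p ^ (r - (⌈r⌉₊ : ℝ)) := by
      rw [Real.rpow_sub hp, ← Real.rpow_natCast p ⌈r⌉₊]
      ring
    rw [h4, ← Real.rpow_neg_one p]
    apply Real.rpow_le_rpow_of_exponent_ge hp hp1.le
    have := Nat.ceil_lt_add_one hr
    linarith

section EZKlem
variable {α0 β0 : ℝ} {N t k : ℕ}

lemma r2_nonneg (hα0 : 0 < α0) (hN : 1 ≤ N) (k : ℕ) :
    (0:ℝ) ≤ ((N:ℝ) - 1) * (α0 + (k:ℝ)) := by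
  have h1 : (1:ℝ) ≤ (N:ℝ) := by exact_mod_cast hN
  have h2 : (0:ℝ) ≤ α0 + (k:ℝ) := by positivity
  nlinarith

lemma EZK_nonneg (hα0 : 0 < α0) (hβ0 : 0 < β0) (hN : 1 ≤ N)
    (f : ℕ → ℕ → ℝ) (hf : ∀ z κ, 0 ≤ f z κ) : 0 ≤ EZK α0 β0 N t k f := by
  have hp := pt_pos hβ0 N t; have hp1 := pt_lt_one hβ0 N t
  have hr1 : (0:ℝ) ≤ α0 + (k:ℝ) := by positivity
  have hr2 := r2_nonneg hα0 hN k
  refine tsum_nonneg fun z => tsum_nonneg fun κ => ?_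
  exact mul_nonneg (mul_nonneg (NB_nonneg hr1 hp hp1 z) (NB_nonneg hr2 hp hp1 κ)) (hf z κ)

lemma EZK_key (hα0 : 0 < α0) (hβ0 : 0 < β0) (hN : 1 ≤ N)
    (h : ℕ → ℕ → ℝ) (C : ℝ) (h0 : ∀ z κ, 0 ≤ h z κ) (hC : ∀ z κ, h z κ ≤ C) :
    (∀ z, Summable (fun κ => NB (α0 + (k : ℝ)) (pt β0 N t) z *
        NB (((N : ℝ) - 1) * (α0 + (k : ℝ))) (pt β0 N t) κ * h z κ)) ∧
    (∀ z, (∑' κ, NB (α0 + (k : ℝ)) (pt β0 N t) z *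
        NB (((N : ℝ) - 1) * (α0 + (k : ℝ))) (pt β0 N t) κ * h z κ)
        ≤ NB (α0 + (k : ℝ)) (pt β0 N t) z * ((pt β0 N t)⁻¹ * C)) ∧
    Summable (fun z => ∑' κ, NB (α0 + (k : ℝ)) (pt β0 N t) z *
        NB (((N : ℝ) - 1) * (α0 + (k : ℝ))) (pt β0 N t) κ * h z κ) := by
  set p := pt β0 N t with hpdef
  have hp := pt_pos hβ0 N t; have hp1 := pt_lt_one hβ0 N t
  have hr1 : (0:ℝ) ≤ α0 + (k:ℝ) := by positivity
  have hr2 := r2_nonneg hα0 hN k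
  set w : ℕ → ℝ := NB (α0 + (k:ℝ)) p with hwdef
  set v : ℕ → ℝ := NB (((N:ℝ) - 1) * (α0 + (k:ℝ))) p with hvdef
  have hw0 : ∀ z, 0 ≤ w z := NB_nonneg hr1 hp hp1
  have hv0 : ∀ κ, 0 ≤ v κ := NB_nonneg hr2 hp hp1
  have hvs : Summable v := NB_summable hr2 hp hp1
  have hws : Summable w := NB_summable hr1 hp hp1
  have hvt : ∑' κ, v κ ≤ p⁻¹ := NB_tsum_le hr2 hp hp1
  have hC0 : (0:ℝ) ≤ C := le_trans (h0 0 0) (hC 0 0)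
  have hin : ∀ z, Summable (fun κ => v κ * h z κ) := fun z =>
    Summable.of_nonneg_of_le (fun κ => mul_nonneg (hv0 κ) (h0 z κ))
      (fun κ => mul_le_mul_of_nonneg_left (hC z κ) (hv0 κ)) (hvs.mul_right C)
  have hsum1 : ∀ z, Summable (fun κ => w z * v κ * h z κ) := by
    intro z
    have : (fun κ => w z * v κ * h z κ) = fun κ => w z * (v κ * h z κ) := by
      funext κ; ring
    rw [this]; exact (hin z).mul_left (w z)
  have hle1 : ∀ z, (∑' κ, w z * v κ * h z κ) ≤ w z * (p⁻¹ * C) := by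
    intro z
    have e1 : (fun κ => w z * v κ * h z κ) = fun κ => w z * (v κ * h z κ) := by
      funext κ; ring
    rw [e1, tsum_mul_left]
    apply mul_le_mul_of_nonneg_left _ (hw0 z)
    have e2 : (∑' κ, v κ * h z κ) ≤ ∑' κ, v κ * C :=
      Summable.tsum_le_tsum (fun κ => mul_le_mul_of_nonneg_left (hC z κ) (hv0 κ))
        (hin z) (hvs.mul_right C)
    refine e2.trans ?_
    rw [tsum_mul_right]
    exact mul_le_mul_of_nonneg_right hvt hC0
  refine ⟨hsum1, hle1, ?_⟩
  apply Summable.of_nonneg_of_le _ hle1 (hws.mul_right (p⁻¹ * C))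
  intro z
  exact tsum_nonneg fun κ =>
    mul_nonneg (mul_nonneg (hw0 z) (hv0 κ)) (h0 z κ)

lemma EZK_le_EZK (hα0 : 0 < α0) (hβ0 : 0 < β0) (hN : 1 ≤ N)
    (f g : ℕ → ℕ → ℝ) (C : ℝ) (hf0 : ∀ z κ, 0 ≤ f z κ)
    (hfg : ∀ z κ, f z κ ≤ g z κ) (hgC : ∀ z κ, g z κ ≤ C) :
    EZK α0 β0 N t k f ≤ EZK α0 β0 N t k g := by
  have hkf := EZK_key (k := k) (t := t) hα0 hβ0 hN f C hf0
    (fun z κ => (hfg z κ).trans (hgC z κ))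
  have hkg := EZK_key (k := k) (t := t) hα0 hβ0 hN g C
    (fun z κ => (hf0 z κ).trans (hfg z κ)) hgC
  have hp := pt_pos hβ0 N t; have hp1 := pt_lt_one hβ0 N t
  have hr1 : (0:ℝ) ≤ α0 + (k:ℝ) := by positivity
  have hr2 := r2_nonneg hα0 hN k
  unfold EZK
  apply Summable.tsum_le_tsum _ hkf.2.2 hkg.2.2
  intro z
  apply Summable.tsum_le_tsum _ (hkf.1 z) (hkg.1 z)
  intro κ
  exact mul_le_mul_of_nonneg_left (hfg z κ)
    (mul_nonneg (NB_nonneg hr1 hp hp1 z) (NB_nonneg hr2 hp hp1 κ))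

lemma EZK_le_const (hα0 : 0 < α0) (hβ0 : 0 < β0) (hN : 1 ≤ N)
    (f : ℕ → ℕ → ℝ) (C : ℝ) (hf0 : ∀ z κ, 0 ≤ f z κ) (hfC : ∀ z κ, f z κ ≤ C) :
    EZK α0 β0 N t k f ≤ (pt β0 N t)⁻¹ * ((pt β0 N t)⁻¹ * C) := by
  have hk := EZK_key (k := k) (t := t) hα0 hβ0 hN f C hf0 hfC
  have hp := pt_pos hβ0 N t; have hp1 := pt_lt_one hβ0 N t
  have hr1 : (0:ℝ) ≤ α0 + (k:ℝ) := by positivity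
  have hC0 : (0:ℝ) ≤ C := le_trans (hf0 0 0) (hfC 0 0)
  have hws : Summable (NB (α0 + (k:ℝ)) (pt β0 N t)) := NB_summable hr1 hp hp1
  unfold EZK
  have h1 := Summable.tsum_le_tsum hk.2.1 hk.2.2 (hws.mul_right ((pt β0 N t)⁻¹ * C))
  refine h1.trans ?_
  rw [tsum_mul_right]
  apply mul_le_mul_of_nonneg_right (NB_tsum_le hr1 hp hp1)
  positivity
end EZKlem

section Vlem
variable {α0 β0 : ℝ} {N T ξ : ℕ} {cp cu : ℝ} {V : ℕ → ℕ → ℕ → ℝ}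

lemma V_bounded (hα0 : 0 < α0) (hβ0 : 0 < β0) (hN : 1 ≤ N)
    (hcp : 0 < cp) (hcpcu : cp < cu)
    (hVT : ∀ x k, V T x k = if ξ ≤ x then cu else 0)
    (hVfail : ∀ t, t < T → ∀ x k, ξ ≤ x →
      V t x k = cu + EZK α0 β0 N t k (fun z κ => V (t + 1) z (k + z + κ)))
    (hVop : ∀ t, t < T → ∀ x k, x < ξ →
      V t x k =
        min (cp + EZK α0 β0 N t k (fun z κ => V (t + 1) z (k + z + κ)))
          (EZK α0 β0 N t k (fun z κ => V (t + 1) (x + z) (k + z + κ)))) :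
    ∀ d t, t + d = T → ∃ C, 0 ≤ C ∧ ∀ x k, 0 ≤ V t x k ∧ V t x k ≤ C := by
  intro d
  induction d with
  | zero =>
    intro t ht
    refine ⟨cu, by linarith, fun x k => ?_⟩
    have : t = T := by omega
    subst this
    rw [hVT]
    split_ifs
    · exact ⟨by linarith, le_refl cu⟩
    · exact ⟨le_refl 0, by linarith⟩
  | succ d ih =>
    intro t ht
    have htT : t < T := by omega
    obtain ⟨C, hC0, hC⟩ := ih (t + 1) (by omega)
    set p := pt β0 N t
    have hp := pt_pos hβ0 N t
    have hcu : (0:ℝ) < cu := lt_trans hcp hcpcu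
    refine ⟨cu + p⁻¹ * (p⁻¹ * C), by nlinarith [inv_pos.mpr hp, mul_nonneg (inv_pos.mpr hp).le (mul_nonneg (inv_pos.mpr hp).le hC0)], fun x k => ?_⟩
    have hE0 : 0 ≤ EZK α0 β0 N t k (fun z κ => V (t + 1) z (k + z + κ)) :=
      EZK_nonneg hα0 hβ0 hN _ (fun z κ => (hC z (k + z + κ)).1)
    have hEC : EZK α0 β0 N t k (fun z κ => V (t + 1) z (k + z + κ)) ≤ p⁻¹ * (p⁻¹ * C) :=
      EZK_le_const hα0 hβ0 hN _ C (fun z κ => (hC z (k + z + κ)).1)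
        (fun z κ => (hC z (k + z + κ)).2)
    by_cases hx : ξ ≤ x
    · rw [hVfail t htT x k hx]
      constructor
      · have : (0:ℝ) < cu := by linarith
        linarith
      · linarith
    · push_neg at hx
      rw [hVop t htT x k hx]
      have hE0' : 0 ≤ EZK α0 β0 N t k (fun z κ => V (t + 1) (x + z) (k + z + κ)) :=
        EZK_nonneg hα0 hβ0 hN _ (fun z κ => (hC (x + z) (k + z + κ)).1)
      constructor
      · apply le_min (by linarith) hE0'
      · apply (min_le_left _ _).trans
        linarith
end Vlem

section Vlem2
variable {α0 β0 : ℝ} {N T ξ : ℕ} {cp cu : ℝ} {V : ℕ → ℕ → ℕ → ℝ}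

lemma V_mono (hα0 : 0 < α0) (hβ0 : 0 < β0) (hN : 1 ≤ N)
    (hcp : 0 < cp) (hcpcu : cp < cu)
    (hVT : ∀ x k, V T x k = if ξ ≤ x then cu else 0)
    (hVfail : ∀ t, t < T → ∀ x k, ξ ≤ x →
      V t x k = cu + EZK α0 β0 N t k (fun z κ => V (t + 1) z (k + z + κ)))
    (hVop : ∀ t, t < T → ∀ x k, x < ξ →
      V t x k =
        min (cp + EZK α0 β0 N t k (fun z κ => V (t + 1) z (k + z + κ)))
          (EZK α0 β0 N t k (fun z κ => V (t + 1) (x + z) (k + z + κ)))) :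
    ∀ d t, t + d = T → ∀ k, Monotone (fun x => V t x k) := by
  intro d
  induction d with
  | zero =>
    intro t ht k x x' hxx'
    have htT : t = T := by omega
    show V t x k ≤ V t x' k
    subst htT
    rw [hVT, hVT]
    split_ifs with h1 h2
    · exact le_refl cu
    · omega
    · linarith
    · exact le_refl 0
  | succ d ih =>
    intro t ht k x x' hxx'
    have htT : t < T := by omega
    have mono' := ih (t + 1) (by omega)
    obtain ⟨C, hC0, hC⟩ := V_bounded hα0 hβ0 hN hcp hcpcu hVT hVfail hVop d (t + 1) (by omega)
    show V t x k ≤ V t x' k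
    by_cases hx' : x' < ξ
    · have hx : x < ξ := lt_of_le_of_lt hxx' hx'
      rw [hVop t htT x k hx, hVop t htT x' k hx']
      apply min_le_min (le_refl _)
      apply EZK_le_EZK hα0 hβ0 hN _ _ C
      · exact fun z κ => (hC (x + z) (k + z + κ)).1
      · exact fun z κ => mono' (k + z + κ) (by omega : x + z ≤ x' + z)
      · exact fun z κ => (hC (x' + z) (k + z + κ)).2
    · push_neg at hx'
      by_cases hx : ξ ≤ x
      · rw [hVfail t htT x k hx, hVfail t htT x' k hx']
      · push_neg at hx
        rw [hVop t htT x k hx, hVfail t htT x' k hx']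
        apply (min_le_left _ _).trans
        exact add_le_add_left hcpcu.le _
end Vlem2


/-- The continuation value `x ↦ E_{(Z,K)}[Ṽ_{t+1}(x+Z, k+Z+K)]` is non-decreasing
in `x`; hence if preventive replacement is optimal at `x`, it is optimal at every
`x' ≥ x`. -/
theorem replacement_region_upward_closed
    (α0 β0 : ℝ) (hα0 : 0 < α0) (hβ0 : 0 < β0)
    (N T : ℕ) (hN : 1 ≤ N) (hT : 1 ≤ T)
    (ξ : ℕ) (hξ : 1 ≤ ξ)
    (cp cu : ℝ) (hcp : 0 < cp) (hcpcu : cp < cu)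
    (V : ℕ → ℕ → ℕ → ℝ)
    (hVT : ∀ x k, V T x k = if ξ ≤ x then cu else 0)
    (hVfail : ∀ t, t < T → ∀ x k, ξ ≤ x →
      V t x k = cu + EZK α0 β0 N t k (fun z κ => V (t + 1) z (k + z + κ)))
    (hVop : ∀ t, t < T → ∀ x k, x < ξ →
      V t x k =
        min (cp + EZK α0 β0 N t k (fun z κ => V (t + 1) z (k + z + κ)))
          (EZK α0 β0 N t k (fun z κ => V (t + 1) (x + z) (k + z + κ)))) :
    ∀ t, t < T → ∀ k : ℕ,
      (Monotone (fun x : ℕ =>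
        EZK α0 β0 N t k (fun z κ => V (t + 1) (x + z) (k + z + κ)))) ∧
      (∀ x x' : ℕ, x ≤ x' →
        cp + EZK α0 β0 N t k (fun z κ => V (t + 1) z (k + z + κ)) ≤
          EZK α0 β0 N t k (fun z κ => V (t + 1) (x + z) (k + z + κ)) →
        cp + EZK α0 β0 N t k (fun z κ => V (t + 1) z (k + z + κ)) ≤
          EZK α0 β0 N t k (fun z κ => V (t + 1) (x' + z) (k + z + κ))) := by
  intro t htT k
  have mono' := V_mono hα0 hβ0 hN hcp hcpcu hVT hVfail hVop (T - (t + 1)) (t + 1) (by omega)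
  obtain ⟨C, hC0, hC⟩ := V_bounded hα0 hβ0 hN hcp hcpcu hVT hVfail hVop
    (T - (t + 1)) (t + 1) (by omega)
  have hmono : Monotone (fun x : ℕ =>
      EZK α0 β0 N t k (fun z κ => V (t + 1) (x + z) (k + z + κ))) := by
    intro x x' hxx'
    show EZK α0 β0 N t k _ ≤ EZK α0 β0 N t k _
    apply EZK_le_EZK hα0 hβ0 hN _ _ C
    · exact fun z κ => (hC (x + z) (k + z + κ)).1
    · exact fun z κ => mono' (k + z + κ) (by omega : x + z ≤ x' + z)
    · exact fun z κ => (hC (x' + z) (k + z + κ)).2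
  exact ⟨hmono, fun x x' hxx' h => h.trans (hmono hxx')⟩
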